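/- Let F be a field, let V and W be F-vector spaces, let e : V → W be a linear map, and let A, B be finite-dimensional subspaces of V. Then dim(e(A) ∩ e(B)) ≤ dim(A ∩ B) + dim((A + B) ∩ ker e), and dim(e(A) ∩ e(B)) ≥ dim(A ∩ B) − dim(A ∩ B ∩ ker e). -/
import Mathlib

open Module Submodule

private lemma rank_nullity_sub {F V W : Type*} [Field F] [AddCommGroup V] [Module F V]
    [AddCommGroup W] [Module F W] (e : V →ₗ[F] W) (p : Submodule F V)
    [FiniteDimensional F p] :
    finrank F (p.map e) + finrank F ↥(p ⊓ LinearMap.ker e) = finrank F p := by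
  have h := LinearMap.finrank_range_add_finrank_ker (e.comp p.subtype)
  have hr : LinearMap.range (e.comp p.subtype) = p.map e := by
    rw [LinearMap.range_comp, Submodule.range_subtype]
  have hk : LinearMap.ker (e.comp p.subtype)
      = (p ⊓ LinearMap.ker e).comap p.subtype := by
    rw [LinearMap.ker_comp]
    ext x; simp [x.2]
  rw [hr, hk] at h
  rwa [(Submodule.comapSubtypeEquivOfLe (inf_le_left : p ⊓ LinearMap.ker e ≤ p)).finrank_eq] at h

theorem stmt17 {F : Type*} [Field F] {V W : Type*} [AddCommGroup V] [Module F V]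
    [AddCommGroup W] [Module F W] (e : V →ₗ[F] W) (A B : Submodule F V)
    [FiniteDimensional F A] [FiniteDimensional F B] :
    Module.finrank F ↥(A.map e ⊓ B.map e) ≤
        Module.finrank F ↥(A ⊓ B) + Module.finrank F ↥((A ⊔ B) ⊓ LinearMap.ker e) ∧
    Module.finrank F ↥(A ⊓ B) - Module.finrank F ↥(A ⊓ B ⊓ LinearMap.ker e) ≤
        Module.finrank F ↥(A.map e ⊓ B.map e) := by
  have hABfd : FiniteDimensional F ↥(A ⊓ B) :=
    Submodule.finiteDimensional_of_le (inf_le_left : A ⊓ B ≤ A)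
  have hA := rank_nullity_sub e A
  have hB := rank_nullity_sub e B
  have hS := rank_nullity_sub e (A ⊔ B)
  have hI := rank_nullity_sub e (A ⊓ B)
  have hsup : finrank F ↥(A ⊔ B) + finrank F ↥(A ⊓ B) = finrank F A + finrank F B :=
    Submodule.finrank_sup_add_finrank_inf_eq A B
  have hmapfdA : FiniteDimensional F (A.map e) := Module.Finite.map A e
  have hmapfdB : FiniteDimensional F (B.map e) := Module.Finite.map B e
  have hsup2 : finrank F ↥(A.map e ⊔ B.map e) + finrank F ↥(A.map e ⊓ B.map e)
      = finrank F (A.map e) + finrank F (B.map e) :=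
    Submodule.finrank_sup_add_finrank_inf_eq _ _
  have hmsup : A.map e ⊔ B.map e = (A ⊔ B).map e := (Submodule.map_sup A B e).symm
  rw [hmsup] at hsup2
  have hmono : finrank F ((A ⊓ B).map e) ≤ finrank F ↥(A.map e ⊓ B.map e) := by
    apply Submodule.finrank_mono
    exact le_inf (Submodule.map_mono inf_le_left) (Submodule.map_mono inf_le_right)
  omega
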